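/- Let K be a field and let O₁ and O₂ be two independent valuation subrings of K, meaning that O₁ ≠ K, O₂ ≠ K, and the only valuation subring of K containing both O₁ and O₂ is K itself. Let A₁ be a nonzero proper ideal of O₁ and A₂ a nonzero proper ideal of O₂. Then K = A₁ + A₂ (every element of K is a sum of an element of A₁ and an element of A₂) and K^× = (1 + A₁)·(1 + A₂) (every nonzero element of K is a product of an element of 1 + A₁ and an element of 1 + A₂). -/

import Mathlib

section IndepAux

variable {K : Type*} [Field K]

/-- membership of a field element in (the image of) an ideal of a valuation subring -/
def memI (O : ValuationSubring K) (A : Ideal O) (x : K) : Prop :=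
  ∃ h : x ∈ O, (⟨x, h⟩ : O) ∈ A

private lemma one_add_inv_mem' (O : ValuationSubring K) {z : K}
    (hz : z ∈ O) (hz' : z⁻¹ ∉ O) : (1 : K) + z ≠ 0 ∧ ((1 : K) + z)⁻¹ ∈ O := by
  have hz0 : z ≠ 0 := by rintro rfl; exact hz' (by simpa using (zero_mem _))
  have h10 : (1 : K) + z ≠ 0 := by
    intro h
    have hz1 : z = -1 := by linear_combination h
    apply hz'
    rw [hz1, inv_neg, inv_one]
    exact neg_mem (one_mem _)
  rcases O.mem_or_inv_mem (z⁻¹ + 1) with h | h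
  · exact absurd (by simpa using sub_mem h (one_mem _)) hz'
  · refine ⟨h10, ?_⟩
    have hzi : z⁻¹ + 1 ≠ 0 := by
      have heq : z⁻¹ + 1 = (1 + z) * z⁻¹ := by field_simp
      rw [heq]
      exact mul_ne_zero h10 (inv_ne_zero hz0)
    have key : (1 + z)⁻¹ = 1 - (z⁻¹ + 1)⁻¹ := by
      field_simp
      ring
    rw [key]
    exact sub_mem (one_mem _) h

/-- abstract axioms satisfied by (colon variants of) nonzero proper ideals -/
structure GoodPred (O : ValuationSubring K) (T : K → Prop) : Prop where
  smul : ∀ k ∈ O, ∀ a, T a → T (k * a)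
  exists_nz : ∃ a, T a ∧ a ≠ 0
  inv_not_mem : ∀ a, T a → a ≠ 0 → a⁻¹ ∉ O
  mem : ∀ a, T a → a ∈ O

lemma GoodPred.colon {O : ValuationSubring K} {T : K → Prop} (h : GoodPred O T)
    {g : K} (hg : g ≠ 0) : GoodPred O (fun a => T a ∧ T (g * a)) where
  smul k hk a ha := by
    refine ⟨h.smul k hk a ha.1, ?_⟩
    have := h.smul k hk (g * a) ha.2
    rwa [show k * (g * a) = g * (k * a) by ring] at this
  exists_nz := by
    obtain ⟨a, ha, ha0⟩ := h.exists_nz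
    rcases O.mem_or_inv_mem g with hgO | hgO
    · exact ⟨a, ⟨ha, h.smul g hgO a ha⟩, ha0⟩
    · refine ⟨g⁻¹ * a, ⟨h.smul g⁻¹ hgO a ha, ?_⟩, mul_ne_zero (inv_ne_zero hg) ha0⟩
      rwa [show g * (g⁻¹ * a) = a by field_simp]
  inv_not_mem a ha ha0 := h.inv_not_mem a ha.1 ha0
  mem a ha := h.mem a ha.1

lemma goodPred_ideal {O : ValuationSubring K} (A : Ideal O) (hA0 : A ≠ ⊥) (hA1 : A ≠ ⊤) :
    GoodPred O (memI O A) where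
  smul k hk a := by
    rintro ⟨ha, haA⟩
    refine ⟨mul_mem hk ha, ?_⟩
    exact A.mul_mem_left ⟨k, hk⟩ haA
  exists_nz := by
    obtain ⟨x, hxA, hx0⟩ := Submodule.ne_bot_iff A |>.1 hA0
    refine ⟨(x : K), ⟨x.2, by simpa using hxA⟩, ?_⟩
    simpa using hx0
  inv_not_mem a ha ha0 hi := by
    obtain ⟨haO, haA⟩ := ha
    have hu : IsUnit (⟨a, haO⟩ : O) := by
      refine isUnit_iff_exists_inv.2 ⟨⟨a⁻¹, hi⟩, ?_⟩
      exact Subtype.ext (by simp [mul_inv_cancel₀ ha0])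
    exact hA1 (Ideal.eq_top_of_isUnit_mem A haA hu)
  mem a ha := ha.1

lemma memI_neg {O : ValuationSubring K} {A : Ideal O} {a : K}
    (h : memI O A a) : memI O A (-a) := by
  obtain ⟨hO, hA⟩ := h
  exact ⟨neg_mem hO, neg_mem hA⟩

/-- every element of K is a product of elements from the two rings (independence) -/
lemma prod_decomp (O₁ O₂ : ValuationSubring K)
    (hindep : ∀ O : ValuationSubring K, O₁ ≤ O → O₂ ≤ O → (O : Set K) = Set.univ) :
    ∀ x : K, ∃ s ∈ O₁, ∃ t ∈ O₂, x = s * t := by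
  set S : Set K := {x | ∃ s ∈ O₁, ∃ t ∈ O₂, x = s * t} with hS
  have hmul : ∀ x y : K, x ∈ S → y ∈ S → x * y ∈ S := by
    rintro x y ⟨s₁, hs₁, t₁, ht₁, rfl⟩ ⟨s₂, hs₂, t₂, ht₂, rfl⟩
    exact ⟨s₁ * s₂, mul_mem hs₁ hs₂, t₁ * t₂, mul_mem ht₁ ht₂, by ring⟩
  have hL1 : ∀ σ τ : K, σ ∈ O₁ → τ ∈ O₂ → (1 + σ * τ) ∈ S := by
    intro σ τ hσ hτ
    by_cases h0 : σ * τ = 0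
    · exact ⟨1 + σ * τ, by rw [h0, add_zero]; exact (one_mem _), 1, (one_mem _),
        (mul_one _).symm⟩
    rcases O₁.mem_or_inv_mem (σ * τ) with h | h
    · exact ⟨1 + σ * τ, add_mem (one_mem _) h, 1, (one_mem _), (mul_one _).symm⟩
    · have hσ0 : σ ≠ 0 := left_ne_zero_of_mul h0
      have hτ0 : τ ≠ 0 := right_ne_zero_of_mul h0
      refine ⟨σ * (1 + (σ * τ)⁻¹), mul_mem hσ (add_mem (one_mem _) h), τ, hτ, ?_⟩
      field_simp
      ring
  have hL2 : ∀ σ τ : K, σ ∈ O₁ → τ ∈ O₂ → (σ + τ) ∈ S := by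
    intro σ τ hσ hτ
    by_cases hτ0 : τ = 0
    · exact ⟨σ, hσ, 1, (one_mem _), by rw [hτ0, add_zero, mul_one]⟩
    by_cases hσ0 : σ = 0
    · exact ⟨1, (one_mem _), τ, hτ, by rw [hσ0, zero_add, one_mul]⟩
    rcases O₁.mem_or_inv_mem (σ * τ⁻¹) with h | h
    · refine ⟨σ * τ⁻¹ + 1, add_mem h (one_mem _), τ, hτ, ?_⟩
      field_simp
    · have h' : σ⁻¹ * τ ∈ O₁ := by rwa [mul_inv, inv_inv] at h
      refine ⟨σ * (1 + σ⁻¹ * τ), mul_mem hσ (add_mem (one_mem _) h'), 1, (one_mem _), ?_⟩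
      field_simp
  have hadd : ∀ x y : K, x ∈ S → y ∈ S → x + y ∈ S := by
    rintro x y ⟨s₁, hs₁, t₁, ht₁, rfl⟩ ⟨s₂, hs₂, t₂, ht₂, rfl⟩
    by_cases h₁0 : s₁ * t₁ = 0
    · rw [h₁0, zero_add]; exact ⟨s₂, hs₂, t₂, ht₂, rfl⟩
    by_cases h₂0 : s₂ * t₂ = 0
    · rw [h₂0, add_zero]; exact ⟨s₁, hs₁, t₁, ht₁, rfl⟩
    have hs₁0 : s₁ ≠ 0 := left_ne_zero_of_mul h₁0
    have ht₁0 : t₁ ≠ 0 := right_ne_zero_of_mul h₁0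
    have hs₂0 : s₂ ≠ 0 := left_ne_zero_of_mul h₂0
    have ht₂0 : t₂ ≠ 0 := right_ne_zero_of_mul h₂0
    rcases O₁.mem_or_inv_mem (s₁ * s₂⁻¹) with hσ | hσ <;>
      rcases O₂.mem_or_inv_mem (t₁ * t₂⁻¹) with hτ | hτ
    · have he : s₁ * t₁ + s₂ * t₂ = (s₂ * t₂) * (1 + (s₁ * s₂⁻¹) * (t₁ * t₂⁻¹)) := by
        field_simp
        try ring
      rw [he]
      exact hmul _ _ ⟨s₂, hs₂, t₂, ht₂, rfl⟩ (hL1 _ _ hσ hτ)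
    · have hτ' : t₂ * t₁⁻¹ ∈ O₂ := by rwa [mul_inv, inv_inv, mul_comm] at hτ
      have he : s₁ * t₁ + s₂ * t₂ = (s₂ * t₁) * ((s₁ * s₂⁻¹) + (t₂ * t₁⁻¹)) := by
        field_simp
        try ring
      rw [he]
      exact hmul _ _ ⟨s₂, hs₂, t₁, ht₁, rfl⟩ (hL2 _ _ hσ hτ')
    · have hσ' : s₂ * s₁⁻¹ ∈ O₁ := by rwa [mul_inv, inv_inv, mul_comm] at hσ
      have he : s₁ * t₁ + s₂ * t₂ = (s₁ * t₂) * ((s₂ * s₁⁻¹) + (t₁ * t₂⁻¹)) := by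
        field_simp
        try ring
      rw [he]
      exact hmul _ _ ⟨s₁, hs₁, t₂, ht₂, rfl⟩ (hL2 _ _ hσ' hτ)
    · have hσ' : s₂ * s₁⁻¹ ∈ O₁ := by rwa [mul_inv, inv_inv, mul_comm] at hσ
      have hτ' : t₂ * t₁⁻¹ ∈ O₂ := by rwa [mul_inv, inv_inv, mul_comm] at hτ
      have he : s₁ * t₁ + s₂ * t₂ = (s₁ * t₁) * (1 + (s₂ * s₁⁻¹) * (t₂ * t₁⁻¹)) := by
        field_simp
        try ring
      rw [he]
      exact hmul _ _ ⟨s₁, hs₁, t₁, ht₁, rfl⟩ (hL1 _ _ hσ' hτ')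
  let Ov : ValuationSubring K :=
    { carrier := S
      mul_mem' := fun hx hy => hmul _ _ hx hy
      one_mem' := ⟨1, (one_mem _), 1, (one_mem _), (mul_one 1).symm⟩
      add_mem' := fun hx hy => hadd _ _ hx hy
      zero_mem' := ⟨0, (zero_mem _), 1, (one_mem _), by rw [zero_mul]⟩
      neg_mem' := by
        rintro x ⟨s, hs, t, ht, rfl⟩
        exact ⟨-s, neg_mem hs, t, ht, (neg_mul s t).symm⟩
      mem_or_inv_mem' := fun x => (O₁.mem_or_inv_mem x).imp
        (fun h => ⟨x, h, 1, (one_mem _), (mul_one x).symm⟩)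
        (fun h => ⟨x⁻¹, h, 1, (one_mem _), (mul_one _).symm⟩) }
  have hle₁ : O₁ ≤ Ov := fun x hx => ⟨x, hx, 1, (one_mem _), (mul_one x).symm⟩
  have hle₂ : O₂ ≤ Ov := fun x hx => ⟨1, (one_mem _), x, hx, (one_mul x).symm⟩
  have huniv := hindep Ov hle₁ hle₂
  intro x
  have hx : x ∈ (Ov : Set K) := huniv ▸ Set.mem_univ x
  exact hx

/-- key splitting lemma -/
lemma key_split (O₁ O₂ : ValuationSubring K) {T₁ T₂ : K → Prop}
    (h₁ : GoodPred O₁ T₁) (h₂ : GoodPred O₂ T₂)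
    (P : ∀ x : K, ∃ s ∈ O₁, ∃ t ∈ O₂, x = s * t) :
    ∃ e : K, T₁ e ∧ T₂ (1 - e) := by
  obtain ⟨b₁, hb₁, hb₁0⟩ := h₁.exists_nz
  obtain ⟨b₂, hb₂, hb₂0⟩ := h₂.exists_nz
  obtain ⟨s, hs, t, ht, hst⟩ := P (b₁ * b₂)⁻¹
  have hbb0 : b₁ * b₂ ≠ 0 := mul_ne_zero hb₁0 hb₂0
  have hq0 : (b₁ * b₂)⁻¹ ≠ 0 := inv_ne_zero hbb0
  have hs0 : s ≠ 0 := by rintro rfl; rw [zero_mul] at hst; exact hq0 hst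
  have ht0 : t ≠ 0 := by rintro rfl; rw [mul_zero] at hst; exact hq0 hst
  set z := s * b₁ with hz
  have hz0 : z ≠ 0 := mul_ne_zero hs0 hb₁0
  have hT₁z : T₁ z := h₁.smul s hs b₁ hb₁
  have hzinv : z⁻¹ = t * b₂ := by
    have h1 : z * (t * b₂) = (b₁ * b₂)⁻¹ * (b₁ * b₂) := by rw [hz, hst]; ring
    rw [inv_mul_cancel₀ hbb0] at h1
    exact (eq_inv_of_mul_eq_one_right h1).symm
  have hT₂zi : T₂ z⁻¹ := by rw [hzinv]; exact h₂.smul t ht b₂ hb₂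
  have hzi_not : z⁻¹ ∉ O₁ := h₁.inv_not_mem z hT₁z hz0
  obtain ⟨h1z0, h1zi⟩ := one_add_inv_mem' O₁ (h₁.mem z hT₁z) hzi_not
  have hz_not : (z⁻¹)⁻¹ ∉ O₂ := h₂.inv_not_mem z⁻¹ hT₂zi (inv_ne_zero hz0)
  obtain ⟨h2z0, h2zi⟩ := one_add_inv_mem' O₂ (h₂.mem z⁻¹ hT₂zi) hz_not
  refine ⟨(1 + z)⁻¹ * z, h₁.smul _ h1zi z hT₁z, ?_⟩
  have key : 1 - (1 + z)⁻¹ * z = (1 + z⁻¹)⁻¹ * z⁻¹ := by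
    rw [← mul_inv, add_mul, one_mul, inv_mul_cancel₀ hz0, add_comm z 1]
    field_simp
    ring
  rw [key]
  exact h₂.smul _ h2zi z⁻¹ hT₂zi

end IndepAux

theorem independent_valuations_ideal_sum_and_prod
    {K : Type*} [Field K] (O₁ O₂ : ValuationSubring K)
    (h₁ : (O₁ : Set K) ≠ Set.univ) (h₂ : (O₂ : Set K) ≠ Set.univ)
    (hindep : ∀ O : ValuationSubring K, O₁ ≤ O → O₂ ≤ O → (O : Set K) = Set.univ)
    (A₁ : Ideal O₁) (hA₁0 : A₁ ≠ ⊥) (hA₁1 : A₁ ≠ ⊤)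
    (A₂ : Ideal O₂) (hA₂0 : A₂ ≠ ⊥) (hA₂1 : A₂ ≠ ⊤) :
    (∀ x : K, ∃ a ∈ A₁, ∃ b ∈ A₂, x = (a : K) + (b : K)) ∧
    (∀ x : K, x ≠ 0 → ∃ a ∈ A₁, ∃ b ∈ A₂, x = (1 + (a : K)) * (1 + (b : K))) := by
  have P := prod_decomp O₁ O₂ hindep
  have g₁ := goodPred_ideal A₁ hA₁0 hA₁1
  have g₂ := goodPred_ideal A₂ hA₂0 hA₂1
  constructor
  · intro x
    by_cases hx : x = 0
    · exact ⟨0, A₁.zero_mem, 0, A₂.zero_mem, by simp [hx]⟩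
    obtain ⟨e, ⟨-, hxe₁⟩, -, hxe₂⟩ := key_split O₁ O₂ (g₁.colon hx) (g₂.colon hx) P
    obtain ⟨ha, haA⟩ := hxe₁
    obtain ⟨hb, hbA⟩ := hxe₂
    exact ⟨⟨x * e, ha⟩, haA, ⟨x * (1 - e), hb⟩, hbA, by push_cast; ring⟩
  · intro x hx
    by_cases hg : (1 : K) - x = 0
    · have hx1 : x = 1 := by linear_combination -hg
      exact ⟨0, A₁.zero_mem, 0, A₂.zero_mem, by simp [hx1]⟩
    obtain ⟨e, ⟨-, hge₁⟩, -, -, hd⟩ :=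
      key_split O₁ O₂ (g₁.colon hg) ((g₂.colon (inv_ne_zero hx)).colon hg) P
    -- hge₁ : memI O₁ A₁ ((1-x) * e), hd : memI O₂ A₂ (x⁻¹ * ((1-x) * (1-e)))
    set a : K := (1 - x) * e with ha_def
    set d : K := x⁻¹ * ((1 - x) * (1 - e)) with hd_def
    have heq : 1 - x = a + x * d := by
      rw [ha_def, hd_def]
      field_simp
      ring
    have hnega : memI O₁ A₁ (-a) := memI_neg hge₁
    obtain ⟨hnaO, hnaA⟩ := hnega
    by_cases hd0 : d = 0
    · refine ⟨⟨-a, hnaO⟩, hnaA, 0, A₂.zero_mem, ?_⟩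
      push_cast
      rw [hd0] at heq
      linear_combination -heq
    · have hd_not : d⁻¹ ∉ O₂ := g₂.inv_not_mem d hd hd0
      obtain ⟨h1d0, h1di⟩ := one_add_inv_mem' O₂ (g₂.mem d hd) hd_not
      have hb : memI O₂ A₂ ((1 + d)⁻¹ * -d) := g₂.smul _ h1di (-d) (memI_neg hd)
      obtain ⟨hbO, hbA⟩ := hb
      refine ⟨⟨-a, hnaO⟩, hnaA, ⟨(1 + d)⁻¹ * -d, hbO⟩, hbA, ?_⟩
      push_cast
      have hkey : 1 + (1 + d)⁻¹ * -d = (1 + d)⁻¹ := by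
        field_simp
        ring
      rw [hkey]
      have hxa : 1 + -a = x * (1 + d) := by linear_combination heq
      rw [hxa, mul_inv_cancel_right₀ h1d0]
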